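/- In the F_2 simplicial chain complex of the boundary of the (n+1)-simplex (with C_r having basis the (r+1)-subsets of {1,...,n+2}), for any v in C_q with d_q(v) != 0, the vector x = (d_q v) ∪ {1} satisfies d_q(x) = d_q(v) and wt(x) <= wt(d_q v). Consequently, setting u = x - v gives d_q(u) = 0 and wt(v + u) <= wt(d_q v), so the soundness parameter epsilon satisfies epsilon >= 1. -/

import Mathlib

open scoped BigOperators

/-- The `F₂` simplicial boundary map on the simplex with vertex set `Fin N`:
sends a chain of cells labelled by `(r+1)`-element subsets to the chain of cells
labelled by `r`-element subsets, each cell going to the sum of its maximal faces. -/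
noncomputable def simpBnd (N r : ℕ)
    (v : {S : Finset (Fin N) // S.card = r + 1} → ZMod 2) :
    {S : Finset (Fin N) // S.card = r} → ZMod 2 :=
  fun T => ∑ S : {S : Finset (Fin N) // S.card = r + 1},
    if T.1 ⊆ S.1 then v S else 0

/-- Number of nonzero coefficients (weight) of a chain. -/
noncomputable def wt {ι : Type*} [Fintype ι] (v : ι → ZMod 2) : ℕ :=
  (Finset.univ.filter fun i => v i ≠ 0).card

/-- The chain `w ∪ {1}`: each cell `T` with `1 ∉ T` is sent to the cell `T ∪ {1}`,
and cells containing `1` are sent to `0`. -/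
def cupOne (n q : ℕ) (w : {S : Finset (Fin (n + 2)) // S.card = q} → ZMod 2) :
    {S : Finset (Fin (n + 2)) // S.card = q + 1} → ZMod 2 :=
  fun S => if h : (1 : Fin (n + 2)) ∈ S.1 then
    w ⟨S.1.erase 1, by rw [Finset.card_erase_of_mem h, S.2]; rfl⟩ else 0

lemma simpBnd_sub (N r : ℕ) (a b : {S : Finset (Fin N) // S.card = r + 1} → ZMod 2) :
    simpBnd N r (a - b) = simpBnd N r a - simpBnd N r b := by
  funext T
  simp only [simpBnd, Pi.sub_apply, ← Finset.sum_sub_distrib]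
  exact Finset.sum_congr rfl fun S _ => by split <;> simp

lemma dd (N q : ℕ) (v : {S : Finset (Fin N) // S.card = q + 1 + 1} → ZMod 2)
    (R : {S : Finset (Fin N) // S.card = q}) :
    simpBnd N q (simpBnd N (q + 1) v) R = 0 := by
  classical
  simp only [simpBnd]
  have h1 : ∀ S : {S : Finset (Fin N) // S.card = q + 1},
      (if R.1 ⊆ S.1 then
        ∑ U : {U : Finset (Fin N) // U.card = q + 1 + 1}, (if S.1 ⊆ U.1 then v U else 0)
      else 0)
      = ∑ U : {U : Finset (Fin N) // U.card = q + 1 + 1},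
          (if R.1 ⊆ S.1 ∧ S.1 ⊆ U.1 then v U else 0) := by
    intro S; split
    · next h => exact Finset.sum_congr rfl fun U _ => by simp [h]
    · next h => simp [h]
  rw [Finset.sum_congr rfl fun S _ => h1 S, Finset.sum_comm]
  refine Finset.sum_eq_zero fun U _ => ?_
  refine Finset.sum_ninvolution
    (fun S => if h : R.1 ⊆ S.1 ∧ S.1 ⊆ U.1 then
      ⟨R.1 ∪ (U.1 \ S.1), by
        have hc : (U.1 \ S.1).card = 1 := by
          rw [Finset.card_sdiff_of_subset h.2, U.2, S.2]; omega
        have hd : Disjoint R.1 (U.1 \ S.1) :=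
          (Finset.sdiff_disjoint.mono_right h.1).symm
        rw [Finset.card_union_of_disjoint hd, R.2, hc]⟩
    else S) ?_ ?_ (fun _ => Finset.mem_univ _) ?_
  · intro S
    by_cases h : R.1 ⊆ S.1 ∧ S.1 ⊆ U.1
    · rw [dif_pos h]
      have h' : R.1 ⊆ R.1 ∪ (U.1 \ S.1) ∧ R.1 ∪ (U.1 \ S.1) ⊆ U.1 :=
        ⟨Finset.subset_union_left, Finset.union_subset (h.1.trans h.2) Finset.sdiff_subset⟩
      rw [if_pos h, if_pos h']
      exact CharTwo.add_self_eq_zero _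
    · rw [dif_neg h, if_neg h, add_zero]
  · intro S hS
    have h : R.1 ⊆ S.1 ∧ S.1 ⊆ U.1 := by by_contra hc; rw [if_neg hc] at hS; exact hS rfl
    rw [dif_pos h]
    intro he
    have : (U.1 \ S.1).Nonempty := by
      rw [← Finset.card_pos, Finset.card_sdiff_of_subset h.2, U.2, S.2]; omega
    obtain ⟨x, hx⟩ := this
    have hx1 : x ∈ S.1 := by
      have := congrArg Subtype.val he
      rw [← this]
      exact Finset.mem_union_right _ hx
    exact (Finset.mem_sdiff.mp hx).2 hx1
  · intro S
    by_cases h : R.1 ⊆ S.1 ∧ S.1 ⊆ U.1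
    · rw [dif_pos h]
      have h' : R.1 ⊆ R.1 ∪ (U.1 \ S.1) ∧ R.1 ∪ (U.1 \ S.1) ⊆ U.1 :=
        ⟨Finset.subset_union_left, Finset.union_subset (h.1.trans h.2) Finset.sdiff_subset⟩
      rw [dif_pos h']
      apply Subtype.ext
      show R.1 ∪ (U.1 \ (R.1 ∪ (U.1 \ S.1))) = S.1
      ext x
      simp only [Finset.mem_union, Finset.mem_sdiff, not_or, not_and, not_not]
      constructor
      · rintro (hr | ⟨hu, hnr, hns⟩)
        · exact h.1 hr
        · by_contra hxs
          exact hxs (by_contra fun hh => hh (hns hu))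
      · intro hs
        by_cases hr : x ∈ R.1
        · exact Or.inl hr
        · exact Or.inr ⟨h.2 hs, hr, fun _ => hs⟩
    · rw [dif_neg h, dif_neg h]

lemma keyGen (n q : ℕ) (w : {S : Finset (Fin (n + 2)) // S.card = q} → ZMod 2)
    (hdd : ∀ R : Finset (Fin (n + 2)), R.card + 1 = q →
      (∑ S : {S : Finset (Fin (n + 2)) // S.card = q}, if R ⊆ S.1 then w S else 0) = 0) :
    simpBnd (n + 2) q (cupOne n q w) = w := by
  classical
  funext T
  show (∑ S' : {S : Finset (Fin (n + 2)) // S.card = q + 1},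
      if T.1 ⊆ S'.1 then cupOne n q w S' else 0) = w T
  by_cases hT : (1 : Fin (n + 2)) ∈ T.1
  · -- case 1 ∈ T
    have hq : 1 ≤ q := by
      rw [← T.2]; exact Finset.card_pos.mpr ⟨1, hT⟩
    have hcard : (T.1.erase 1).card + 1 = q := by
      rw [Finset.card_erase_of_mem hT, T.2]; omega
    have h0 := hdd (T.1.erase 1) hcard
    rw [← Finset.sum_filter] at h0 ⊢
    have hTmem : T ∈ Finset.univ.filter
        (fun S : {S : Finset (Fin (n + 2)) // S.card = q} => T.1.erase 1 ⊆ S.1) := by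
      simp [Finset.erase_subset]
    rw [← Finset.add_sum_erase _ _ hTmem] at h0
    have hB : (∑ S ∈ (Finset.univ.filter
        (fun S : {S : Finset (Fin (n + 2)) // S.card = q} => T.1.erase 1 ⊆ S.1)).erase T,
        w S) = w T := by
      have := eq_neg_of_add_eq_zero_right h0
      rw [this, CharTwo.neg_eq]
    rw [← hB]
    -- bijection between the two index sets
    refine Finset.sum_bij'
      (i := fun (S' : {S : Finset (Fin (n + 2)) // S.card = q + 1}) hS' =>
        (⟨S'.1.erase 1, by
          have h1 : (1 : Fin (n + 2)) ∈ S'.1 := by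
            simp only [Finset.mem_filter] at hS'; exact hS'.2 hT
          rw [Finset.card_erase_of_mem h1, S'.2]; rfl⟩ :
          {S : Finset (Fin (n + 2)) // S.card = q}))
      (j := fun (S : {S : Finset (Fin (n + 2)) // S.card = q}) hS =>
        (⟨insert 1 S.1, by
          have h1 : (1 : Fin (n + 2)) ∉ S.1 := by
            simp only [Finset.mem_erase, Finset.mem_filter] at hS
            intro h1
            apply hS.1
            apply Subtype.ext
            apply (Finset.eq_of_subset_of_card_le ?_ ?_).symm
            · rw [← Finset.insert_erase hT]
              exact Finset.insert_subset h1 hS.2.2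
            · rw [T.2, S.2]
          rw [Finset.card_insert_of_notMem h1, S.2]⟩ :
          {S : Finset (Fin (n + 2)) // S.card = q + 1}))
      ?_ ?_ ?_ ?_ ?_
    · intro S' hS'
      simp only [Finset.mem_filter] at hS'
      have h1 : (1 : Fin (n + 2)) ∈ S'.1 := hS'.2 hT
      simp only [Finset.mem_erase, Finset.mem_filter, Finset.mem_univ, true_and]
      refine ⟨?_, Finset.erase_subset_erase _ hS'.2⟩
      intro he
      have hv : S'.1.erase 1 = T.1 := congrArg Subtype.val he
      have : (1 : Fin (n + 2)) ∈ S'.1.erase 1 := by rw [hv]; exact hT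
      simp at this
    · intro S hS
      simp only [Finset.mem_erase, Finset.mem_filter, Finset.mem_univ, true_and] at hS
      simp only [Finset.mem_filter, Finset.mem_univ, true_and]
      rw [← Finset.insert_erase hT]
      exact Finset.insert_subset_insert _ hS.2
    · intro S' hS'
      simp only [Finset.mem_filter] at hS'
      have h1 : (1 : Fin (n + 2)) ∈ S'.1 := hS'.2 hT
      exact Subtype.ext (Finset.insert_erase h1)
    · intro S hS
      simp only [Finset.mem_erase, Finset.mem_filter, Finset.mem_univ, true_and] at hS
      apply Subtype.ext
      apply Finset.erase_insert
      intro h1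
      apply hS.1
      apply Subtype.ext
      apply (Finset.eq_of_subset_of_card_le ?_ ?_).symm
      · rw [← Finset.insert_erase hT]
        exact Finset.insert_subset h1 hS.2
      · rw [T.2, S.2]
    · intro S' hS'
      simp only [Finset.mem_filter] at hS'
      have h1 : (1 : Fin (n + 2)) ∈ S'.1 := hS'.2 hT
      rw [cupOne, dif_pos h1]
  · -- case 1 ∉ T
    have hS0 : (insert 1 T.1).card = q + 1 := by
      rw [Finset.card_insert_of_notMem hT, T.2]
    rw [Finset.sum_eq_single (⟨insert 1 T.1, hS0⟩ : {S : Finset (Fin (n + 2)) // S.card = q + 1})]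
    · rw [if_pos (Finset.subset_insert _ _), cupOne, dif_pos (Finset.mem_insert_self _ _)]
      exact congrArg w (Subtype.ext (Finset.erase_insert hT))
    · intro S _ hne
      by_cases hsub : T.1 ⊆ S.1
      · rw [if_pos hsub, cupOne]
        split
        · next h1 =>
          exfalso
          apply hne
          apply Subtype.ext
          apply (Finset.eq_of_subset_of_card_le (Finset.insert_subset h1 hsub) ?_).symm
          rw [hS0, S.2]
        · rfl
      · rw [if_neg hsub]
    · intro h; exact absurd (Finset.mem_univ _) h

lemma wtLe (n q : ℕ) (w : {S : Finset (Fin (n + 2)) // S.card = q} → ZMod 2) :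
    wt (cupOne n q w) ≤ wt w := by
  classical
  rcases (Finset.univ.filter fun S' : {S : Finset (Fin (n + 2)) // S.card = q + 1} =>
      cupOne n q w S' ≠ 0).eq_empty_or_nonempty with he | ⟨S0, hS0⟩
  · rw [wt, he]; simp
  · simp only [Finset.mem_filter, Finset.mem_univ, true_and] at hS0
    have h10 : (1 : Fin (n + 2)) ∈ S0.1 := by
      by_contra h; rw [cupOne, dif_neg h] at hS0; exact hS0 rfl
    set d0 : {S : Finset (Fin (n + 2)) // S.card = q} :=
      ⟨S0.1.erase 1, by rw [Finset.card_erase_of_mem h10, S0.2]; rfl⟩ with hd0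
    apply Finset.card_le_card_of_injOn
      (fun S' => if h : (1 : Fin (n + 2)) ∈ S'.1 then
        ⟨S'.1.erase 1, by rw [Finset.card_erase_of_mem h, S'.2]; rfl⟩ else d0)
    · intro S' hS'
      simp only [Finset.mem_coe, Finset.mem_filter, Finset.mem_univ, true_and] at hS' ⊢
      have h1 : (1 : Fin (n + 2)) ∈ S'.1 := by
        by_contra h; rw [cupOne, dif_neg h] at hS'; exact hS' rfl
      rw [dif_pos h1]
      rw [cupOne, dif_pos h1] at hS'
      exact hS'
    · intro a ha b hb hab
      simp only [Finset.coe_filter, Set.mem_setOf_eq, Finset.mem_univ, true_and] at ha hb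
      have h1a : (1 : Fin (n + 2)) ∈ a.1 := by
        by_contra h; rw [cupOne, dif_neg h] at ha; exact ha rfl
      have h1b : (1 : Fin (n + 2)) ∈ b.1 := by
        by_contra h; rw [cupOne, dif_neg h] at hb; exact hb rfl
      dsimp only at hab
      rw [dif_pos h1a, dif_pos h1b] at hab
      have hv : a.1.erase 1 = b.1.erase 1 := congrArg Subtype.val hab
      apply Subtype.ext
      rw [← Finset.insert_erase h1a, ← Finset.insert_erase h1b, hv]

theorem stmt16 (n q : ℕ)
    (v : {S : Finset (Fin (n + 2)) // S.card = q + 1} → ZMod 2)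
    (hv : simpBnd (n + 2) q v ≠ 0) :
    simpBnd (n + 2) q (cupOne n q (simpBnd (n + 2) q v)) = simpBnd (n + 2) q v ∧
    wt (cupOne n q (simpBnd (n + 2) q v)) ≤ wt (simpBnd (n + 2) q v) ∧
    simpBnd (n + 2) q (cupOne n q (simpBnd (n + 2) q v) - v) = 0 ∧
    wt (v + (cupOne n q (simpBnd (n + 2) q v) - v)) ≤ wt (simpBnd (n + 2) q v) := by
  have hkey : simpBnd (n + 2) q (cupOne n q (simpBnd (n + 2) q v)) = simpBnd (n + 2) q v := by
    apply keyGen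
    intro R hR
    subst hR
    exact dd (n + 2) R.card v ⟨R, rfl⟩
  have hwt := wtLe n q (simpBnd (n + 2) q v)
  refine ⟨hkey, hwt, ?_, ?_⟩
  · rw [simpBnd_sub, hkey, sub_self]
  · have h : v + (cupOne n q (simpBnd (n + 2) q v) - v) = cupOne n q (simpBnd (n + 2) q v) := by
      ring
    rw [h]
    exact hwt
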